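/- Let A and B be Banach algebras, let T : A → B be a bounded linear surjective map, and define the bounded bilinear map m : A × B → B by m(a,b) = T(a)b (product taken in B). If m is left strongly Arens irregular, then B is left strongly Arens irregular. -/

import Mathlib

open Filter Topology ContinuousLinearMap NormedSpace

noncomputable section

variable {X Y Z W E F : Type*}
  [NormedAddCommGroup X] [NormedSpace ℂ X]
  [NormedAddCommGroup Y] [NormedSpace ℂ Y]
  [NormedAddCommGroup Z] [NormedSpace ℂ Z]
  [NormedAddCommGroup E] [NormedSpace ℂ E]
  [NormedAddCommGroup F] [NormedSpace ℂ F]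

/-- Port helper: `NormedSpace.Dual` as in the older Mathlib (since replaced by `StrongDual`). -/
abbrev NormedSpace.Dual (𝕜 : Type*) (E : Type*) [NontriviallyNormedField 𝕜]
    [SeminormedAddCommGroup E] [NormedSpace 𝕜 E] : Type _ :=
  E →L[𝕜] 𝕜

/-- The (first) Arens adjoint `m* : Z* × X → Y*` of a bounded bilinear map
`m : X × Y → Z`, characterized by `⟨m*(z',x), y⟩ = ⟨z', m(x,y)⟩`. -/
noncomputable def arensAdj (m : X →L[ℂ] Y →L[ℂ] Z) :
    Dual ℂ Z →L[ℂ] X →L[ℂ] Dual ℂ Y :=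
  ((ContinuousLinearMap.compL ℂ Y Z ℂ).flip.comp m).flip

/-- The Arens triple adjoint `m*** : X** × Y** → Z**`. -/
noncomputable def arensExt (m : X →L[ℂ] Y →L[ℂ] Z) :
    Dual ℂ (Dual ℂ X) →L[ℂ] Dual ℂ (Dual ℂ Y) →L[ℂ] Dual ℂ (Dual ℂ Z) :=
  arensAdj (arensAdj (arensAdj m))

/-- A map between dual spaces is weak*-weak* continuous. -/
def IsWeakStarCont (f : Dual ℂ E → Dual ℂ F) : Prop :=
  Continuous fun x : WeakDual ℂ E =>
    StrongDual.toWeakDual (f (WeakDual.toStrongDual x))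

/-- First topological center of a bounded bilinear map. -/
def arensZ1 (m : X →L[ℂ] Y →L[ℂ] Z) : Set (Dual ℂ (Dual ℂ X)) :=
  {x'' | IsWeakStarCont fun y'' => arensExt m x'' y''}

/-- Second topological center of a bounded bilinear map. -/
def arensZ2 (m : X →L[ℂ] Y →L[ℂ] Z) : Set (Dual ℂ (Dual ℂ Y)) :=
  {y'' | IsWeakStarCont fun x'' => arensExt m.flip y'' x''}

/-- `m` is Arens regular when `m*** = m^{t***t}`. -/
def ArensRegular (m : X →L[ℂ] Y →L[ℂ] Z) : Prop :=
  arensExt m = (arensExt m.flip).flip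

/-- `m` is left strongly Arens irregular when `Z₁(m)` is the canonical image of `X`. -/
def LeftStronglyArensIrregular (m : X →L[ℂ] Y →L[ℂ] Z) : Prop :=
  arensZ1 m = Set.range (NormedSpace.inclusionInDoubleDual ℂ X)

/-- `m` is right strongly Arens irregular when `Z₂(m)` is the canonical image of `Y`. -/
def RightStronglyArensIrregular (m : X →L[ℂ] Y →L[ℂ] Z) : Prop :=
  arensZ2 m = Set.range (NormedSpace.inclusionInDoubleDual ℂ Y)

/-- The adjoint `T* : F* → E*` of a bounded linear map. -/
noncomputable def dualMap' (T : E →L[ℂ] F) : Dual ℂ F →L[ℂ] Dual ℂ E :=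
  (ContinuousLinearMap.compL ℂ E F ℂ).flip T

/-- The second adjoint `T** : E** → F**` of a bounded linear map. -/
noncomputable def bidualMap (T : E →L[ℂ] F) :
    Dual ℂ (Dual ℂ E) →L[ℂ] Dual ℂ (Dual ℂ F) :=
  dualMap' (dualMap' T)

/-- A net in `A`: a function from a nonempty directed preorder to `A`. -/
structure Net (A : Type*) where
  ι : Type
  [pre : Preorder ι]
  [dir : IsDirected ι (· ≤ ·)]
  [ne : Nonempty ι]
  e : ι → A

attribute [instance] Net.pre Net.dir Net.ne

/-- A bounded approximate identity for a (non-unital) Banach algebra. -/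
def IsBAI {A : Type*} [NonUnitalNormedRing A] (N : Net A) : Prop :=
  (∃ C : ℝ, ∀ i, ‖N.e i‖ ≤ C) ∧
  (∀ a : A, Tendsto (fun i => N.e i * a) atTop (𝓝 a)) ∧
  (∀ a : A, Tendsto (fun i => a * N.e i) atTop (𝓝 a))

end


noncomputable section AuxSurj

variable {E F : Type*}
  [NormedAddCommGroup E] [NormedSpace ℂ E]
  [NormedAddCommGroup F] [NormedSpace ℂ F]

theorem bidualMap_surjective [CompleteSpace E] [CompleteSpace F]
    (T : E →L[ℂ] F) (hT : Function.Surjective T) :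
    Function.Surjective (bidualMap T) := by
  obtain ⟨C, Cpos, hC⟩ := T.exists_preimage_norm_le hT
  set S : Dual ℂ F →L[ℂ] Dual ℂ E := dualMap' T with hS
  have hSapp : ∀ (g : Dual ℂ F) (a : E), S g a = g (T a) := fun g a => rfl
  have hbound : ∀ g : Dual ℂ F, ‖g‖ ≤ C * ‖S g‖ := by
    intro g
    refine g.opNorm_le_bound (by positivity) fun b => ?_
    obtain ⟨a, ha, hna⟩ := hC b
    calc ‖g b‖ = ‖S g a‖ := by rw [hSapp, ha]
    _ ≤ ‖S g‖ * ‖a‖ := (S g).le_opNorm a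
    _ ≤ ‖S g‖ * (C * ‖b‖) := by gcongr
    _ = C * ‖S g‖ * ‖b‖ := by ring
  have hinj : Function.Injective S := by
    intro g h hgh
    have : ‖g - h‖ ≤ C * ‖S (g - h)‖ := hbound _
    rw [map_sub, hgh, sub_self, norm_zero, mul_zero, norm_le_zero_iff, sub_eq_zero] at this
    exact this
  intro b''
  let p : Submodule ℂ (Dual ℂ E) := LinearMap.range (S : Dual ℂ F →ₗ[ℂ] Dual ℂ E)
  let e : Dual ℂ F ≃ₗ[ℂ] p := LinearEquiv.ofInjective (S : Dual ℂ F →ₗ[ℂ] Dual ℂ E) hinj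
  have hecoe : ∀ g : Dual ℂ F, ((e g : Dual ℂ E)) = S g := fun g => rfl
  let φ : p →ₗ[ℂ] ℂ := (b'' : Dual ℂ F →ₗ[ℂ] ℂ).comp e.symm.toLinearMap
  have hφb : ∀ x : p, ‖φ x‖ ≤ (‖b''‖ * C) * ‖x‖ := by
    intro x
    have hx : S (e.symm x) = (x : Dual ℂ E) :=
      (hecoe _).symm.trans (congrArg Subtype.val (e.apply_symm_apply x))
    calc ‖φ x‖ = ‖b'' (e.symm x)‖ := rfl
    _ ≤ ‖b''‖ * ‖e.symm x‖ := b''.le_opNorm _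
    _ ≤ ‖b''‖ * (C * ‖S (e.symm x)‖) :=
        mul_le_mul_of_nonneg_left (hbound _) (norm_nonneg _)
    _ = (‖b''‖ * C) * ‖x‖ := by rw [hx, Submodule.coe_norm]; ring
  obtain ⟨g'', hg'', -⟩ := exists_extension_norm_eq p (φ.mkContinuous _ hφb)
  refine ⟨g'', ?_⟩
  ext g
  have hmem : S g ∈ p := ⟨g, rfl⟩
  have h1 : g'' (S g) = φ ⟨S g, hmem⟩ := hg'' ⟨S g, hmem⟩
  have he2 : e.symm ⟨S g, hmem⟩ = g := by
    apply hinj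
    exact (hecoe _).symm.trans (congrArg Subtype.val (e.apply_symm_apply ⟨S g, hmem⟩))
  calc bidualMap T g'' g = g'' (S g) := rfl
  _ = φ ⟨S g, hmem⟩ := h1
  _ = b'' g := by show b'' (e.symm ⟨S g, hmem⟩) = b'' g; rw [he2]

end AuxSurj

/-- For surjective `T`, if `m(a,b) = T(a)b` is left strongly Arens
irregular then so is `B`. -/
theorem stmt_2 {A B : Type*} [NonUnitalNormedRing A] [NormedSpace ℂ A] [IsScalarTower ℂ A A] [SMulCommClass ℂ A A] [CompleteSpace A] [NonUnitalNormedRing B] [NormedSpace ℂ B] [IsScalarTower ℂ B B] [SMulCommClass ℂ B B] [CompleteSpace B]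
    (T : A →L[ℂ] B) (hT : Function.Surjective T)
    (hm : LeftStronglyArensIrregular ((ContinuousLinearMap.mul ℂ B).comp T)) :
    LeftStronglyArensIrregular (ContinuousLinearMap.mul ℂ B) := by
  have key : ∀ (a'' : Dual ℂ (Dual ℂ A)) (y'' : Dual ℂ (Dual ℂ B)),
      arensExt ((ContinuousLinearMap.mul ℂ B).comp T) a'' y''
        = arensExt (ContinuousLinearMap.mul ℂ B) (bidualMap T a'') y'' := fun _ _ => rfl
  unfold LeftStronglyArensIrregular at hm ⊢
  apply Set.Subset.antisymm
  · intro b'' hb''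
    obtain ⟨a'', ha''⟩ := bidualMap_surjective T hT b''
    have hmem : a'' ∈ arensZ1 ((ContinuousLinearMap.mul ℂ B).comp T) := by
      have hf : (fun y'' => arensExt ((ContinuousLinearMap.mul ℂ B).comp T) a'' y'')
          = fun y'' => arensExt (ContinuousLinearMap.mul ℂ B) b'' y'' := by
        funext y''; rw [key, ha'']
      show IsWeakStarCont fun y'' =>
        arensExt ((ContinuousLinearMap.mul ℂ B).comp T) a'' y''
      rw [hf]; exact hb''
    rw [hm] at hmem
    obtain ⟨a, ha⟩ := hmem
    exact ⟨T a, by rw [← ha'', ← ha]; rfl⟩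
  · rintro _ ⟨b, rfl⟩
    obtain ⟨a, rfl⟩ := hT b
    have hmem : inclusionInDoubleDual ℂ A a ∈
        arensZ1 ((ContinuousLinearMap.mul ℂ B).comp T) := by
      rw [hm]; exact ⟨a, rfl⟩
    exact hmem
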